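/- Let 𝕏 be a compact metric space. If A⊆𝕏 is an open set with η(∂A)=0, then τ(cl(A))≤η(A), where cl(A) denotes the closure of A and ∂A its topological boundary. -/

import Mathlib

open MeasureTheory Filter Set Topology
open scoped ENNReal

/-- A finitely additive outer probability on `X`: a monotone, finitely subadditive set
function defined on all subsets of `X`, with values in `[0,1]` and total mass `1`. -/
structure FinAddOuterProb (X : Type*) where
  toFun : Set X → ℝ≥0∞
  mono' : ∀ ⦃A B : Set X⦄, A ⊆ B → toFun A ≤ toFun B
  subadd' : ∀ A B : Set X, toFun (A ∪ B) ≤ toFun A + toFun B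
  le_one' : ∀ A : Set X, toFun A ≤ 1
  univ_eq' : toFun Set.univ = 1

/-- The premeasure `τ(A) = limsup_n (1/n) ∑_{j<n} ξ_j(A)`. -/
noncomputable def tauSeq {X : Type*} (ξ : ℕ → FinAddOuterProb X) (A : Set X) : ℝ≥0∞ :=
  Filter.atTop.limsup fun n : ℕ => (∑ j ∈ Finset.range n, (ξ j).toFun A) / (n : ℝ≥0∞)

/-- `ν_r(Y)`: infimum of `∑_i τ(I_i)` over countable covers of `Y` by open sets of
diameter at most `r`. -/
noncomputable def nuSeqAux {X : Type*} [MetricSpace X] (ξ : ℕ → FinAddOuterProb X) (r : ℝ)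
    (Y : Set X) : ℝ≥0∞ :=
  ⨅ (I : ℕ → Set X) (_ : Y ⊆ ⋃ n, I n) (_ : ∀ n, IsOpen (I n))
    (_ : ∀ n, EMetric.diam (I n) ≤ ENNReal.ofReal r), ∑' n, tauSeq ξ (I n)

/-- `ν(Y) = sup_{r>0} ν_r(Y)`, the Carathéodory Method II construction from `τ`. -/
noncomputable def nuSeq {X : Type*} [MetricSpace X] (ξ : ℕ → FinAddOuterProb X)
    (Y : Set X) : ℝ≥0∞ :=
  ⨆ (r : ℝ) (_ : 0 < r), nuSeqAux ξ r Y

lemma tauSeq_mono {X : Type*} (ξ : ℕ → FinAddOuterProb X) {A B : Set X} (h : A ⊆ B) :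
    tauSeq ξ A ≤ tauSeq ξ B := by
  refine Filter.limsup_le_limsup (Filter.Eventually.of_forall fun n => ?_)
  exact ENNReal.div_le_div_right (Finset.sum_le_sum fun j _ => (ξ j).mono' h) _

lemma ennreal_limsup_add_le (u v : ℕ → ℝ≥0∞) :
    Filter.atTop.limsup (fun n => u n + v n) ≤
      Filter.atTop.limsup u + Filter.atTop.limsup v := by
  by_cases h1 : Filter.atTop.limsup u = ⊤
  · simp [h1]
  by_cases h2 : Filter.atTop.limsup v = ⊤
  · simp [h2]
  refine ENNReal.le_of_forall_pos_le_add fun ε hε _ => ?_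
  have hε2 : (0 : ℝ≥0∞) < ε / 2 := by
    simp [ENNReal.div_pos_iff, (by exact_mod_cast hε.ne' : (ε : ℝ≥0∞) ≠ 0)]
  have hu : ∀ᶠ n in Filter.atTop, u n < Filter.atTop.limsup u + ε / 2 :=
    Filter.eventually_lt_of_limsup_lt (ENNReal.lt_add_right h1 hε2.ne')
  have hv : ∀ᶠ n in Filter.atTop, v n < Filter.atTop.limsup v + ε / 2 :=
    Filter.eventually_lt_of_limsup_lt (ENNReal.lt_add_right h2 hε2.ne')
  have := Filter.limsup_le_of_le (f := Filter.atTop)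
    (u := fun n => u n + v n)
    (a := (Filter.atTop.limsup u + ε / 2) + (Filter.atTop.limsup v + ε / 2))
    (by isBoundedDefault)
    ((hu.and hv).mono fun n hn => add_le_add hn.1.le hn.2.le)
  calc Filter.atTop.limsup (fun n => u n + v n)
      ≤ (Filter.atTop.limsup u + ε / 2) + (Filter.atTop.limsup v + ε / 2) := this
    _ = Filter.atTop.limsup u + Filter.atTop.limsup v + (ε / 2 + ε / 2) := by ring
    _ = Filter.atTop.limsup u + Filter.atTop.limsup v + ε := by rw [ENNReal.add_halves]

lemma tauSeq_union {X : Type*} (ξ : ℕ → FinAddOuterProb X) (A B : Set X) :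
    tauSeq ξ (A ∪ B) ≤ tauSeq ξ A + tauSeq ξ B := by
  refine le_trans (Filter.limsup_le_limsup (Filter.Eventually.of_forall fun n => ?_))
    (ennreal_limsup_add_le _ _)
  show _ ≤ (∑ j ∈ Finset.range n, (ξ j).toFun A) / (n : ℝ≥0∞) +
    (∑ j ∈ Finset.range n, (ξ j).toFun B) / (n : ℝ≥0∞)
  rw [← ENNReal.add_div, ← Finset.sum_add_distrib]
  exact ENNReal.div_le_div_right (Finset.sum_le_sum fun j _ => (ξ j).subadd' A B) _

lemma tauSeq_finset_union {X : Type*} (ξ : ℕ → FinAddOuterProb X) {ι : Type*}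
    (s : Finset ι) (hs : s.Nonempty) (I : ι → Set X) :
    tauSeq ξ (⋃ i ∈ s, I i) ≤ ∑ i ∈ s, tauSeq ξ (I i) := by
  classical
  induction hs using Finset.Nonempty.cons_induction with
  | singleton i => simp
  | cons a s ha hs ih =>
      rw [Finset.sum_cons, Finset.cons_eq_insert, Finset.set_biUnion_insert]
      exact le_trans (tauSeq_union ξ _ _) (add_le_add le_rfl ih)

/-- Let `𝕏` be a compact metric space. If `A ⊆ 𝕏` is open with `η(∂A) = 0`, then
`τ(cl(A)) ≤ η(A)`. -/
theorem tau_closure_le_eta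
    {X : Type*} [MetricSpace X] [CompactSpace X] [MeasurableSpace X] [BorelSpace X]
    (ξ : ℕ → FinAddOuterProb X)
    (η : Measure X) (hη : ∀ E : Set X, MeasurableSet E → η E = nuSeq ξ E)
    (A : Set X) (hA : IsOpen A) (hbd : η (frontier A) = 0) :
    tauSeq ξ (closure A) ≤ η A := by
  have hKc : IsCompact (closure A) := isClosed_closure.isCompact
  -- τ(cl A) ≤ ν_1(cl A)
  have h1 : tauSeq ξ (closure A) ≤ nuSeqAux ξ 1 (closure A) := by
    refine le_iInf fun I => le_iInf fun hcov => le_iInf fun hop => le_iInf fun _ => ?_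
    obtain ⟨t, ht⟩ := hKc.elim_finite_subcover I hop hcov
    have ht' : closure A ⊆ ⋃ i ∈ insert 0 t, I i := by
      refine ht.trans (Set.biUnion_subset_biUnion_left ?_)
      exact fun i hi => Finset.mem_insert_of_mem hi
    calc tauSeq ξ (closure A) ≤ tauSeq ξ (⋃ i ∈ insert 0 t, I i) := tauSeq_mono ξ ht'
      _ ≤ ∑ i ∈ insert 0 t, tauSeq ξ (I i) :=
          tauSeq_finset_union ξ _ (Finset.insert_nonempty _ _) I
      _ ≤ ∑' n, tauSeq ξ (I n) := ENNReal.sum_le_tsum _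
  have h2 : nuSeqAux ξ 1 (closure A) ≤ nuSeq ξ (closure A) := by
    refine le_iSup_of_le 1 ?_
    exact le_iSup_of_le one_pos le_rfl
  have h3 : nuSeq ξ (closure A) = η (closure A) :=
    (hη (closure A) isClosed_closure.measurableSet).symm
  have h4 : η (closure A) ≤ η A := by
    have hsub : closure A ⊆ A ∪ frontier A := by
      intro x hx
      by_cases hxA : x ∈ A
      · exact Or.inl hxA
      · exact Or.inr ⟨hx, by rwa [hA.interior_eq]⟩
    calc η (closure A) ≤ η (A ∪ frontier A) := measure_mono hsub
      _ ≤ η A + η (frontier A) := measure_union_le _ _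
      _ = η A := by rw [hbd, add_zero]
  exact h1.trans (h2.trans (h3.trans_le h4))
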